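/- Let Φ be a unital Schwarz map on n×n matrices with a faithful invariant state ρ. If U is a unitary matrix with Φ(U) = λU for some λ on the unit circle, then Φ(U*U) = Φ(U)*Φ(U), i.e. peripheral unitary eigenvectors lie in the multiplicative domain. -/

import Mathlib

open Matrix
open scoped ComplexOrder

lemma psd_trace_zero {n : ℕ} {M : Matrix (Fin n) (Fin n) ℂ} (hM : M.PosSemidef)
    (h : M.trace = 0) : M = 0 := by
  obtain ⟨B, rfl⟩ : ∃ B : Matrix (Fin n) (Fin n) ℂ, M = Bᴴ * B := by
    open scoped MatrixOrder in exact CStarAlgebra.nonneg_iff_eq_star_mul_self.mp hM.nonneg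
  rw [Matrix.conjTranspose_mul_self_eq_zero]
  have hdiag : ∀ j, (Bᴴ * B) j j = star (fun i => B i j) ⬝ᵥ (fun i => B i j) := by
    intro j
    simp [Matrix.mul_apply, dotProduct, Matrix.conjTranspose_apply]
  have hnonneg : ∀ j, (0:ℂ) ≤ (Bᴴ * B) j j := by
    intro j
    rw [hdiag j]
    exact dotProduct_star_self_nonneg _
  have htr : ∑ j, (Bᴴ * B) j j = 0 := h
  have hzero : ∀ j ∈ Finset.univ, (Bᴴ * B) j j = 0 :=
    (Finset.sum_eq_zero_iff_of_nonneg (fun j _ => hnonneg j)).mp htr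
  ext i j
  have := (dotProduct_star_self_eq_zero).mp
    ((hdiag j ▸ hzero j (Finset.mem_univ j)))
  exact congrFun this i

lemma psd_eq_zero_of_trace_rho {n : ℕ} {ρ D : Matrix (Fin n) (Fin n) ℂ}
    (hρ : ρ.PosDef) (hD : D.PosSemidef) (h : (ρ * D).trace = 0) : D = 0 := by
  obtain ⟨C, rfl⟩ : ∃ C : Matrix (Fin n) (Fin n) ℂ, D = Cᴴ * C := by
    open scoped MatrixOrder in exact CStarAlgebra.nonneg_iff_eq_star_mul_self.mp hD.nonneg
  have h1 : (C * ρ * Cᴴ).trace = 0 := by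
    rw [Matrix.trace_mul_cycle, Matrix.trace_mul_comm]
    exact h
  have h2 : C * ρ * Cᴴ = 0 :=
    psd_trace_zero (hρ.posSemidef.mul_mul_conjTranspose_same C) h1
  obtain ⟨R, hR⟩ : ∃ R : Matrix (Fin n) (Fin n) ℂ, ρ = Rᴴ * R := by
    open scoped MatrixOrder in exact CStarAlgebra.nonneg_iff_eq_star_mul_self.mp hρ.posSemidef.nonneg
  have h3 : (R * Cᴴ)ᴴ * (R * Cᴴ) = 0 := by
    rw [Matrix.conjTranspose_mul, Matrix.conjTranspose_conjTranspose]
    calc C * Rᴴ * (R * Cᴴ) = C * (Rᴴ * R) * Cᴴ := by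
          simp only [Matrix.mul_assoc]
      _ = 0 := by rw [← hR]; exact h2
  have h4 : R * Cᴴ = 0 := Matrix.conjTranspose_mul_self_eq_zero.mp h3
  have h5 : ρ * Cᴴ = 0 := by rw [hR, Matrix.mul_assoc, h4, Matrix.mul_zero]
  have hunit : IsUnit ρ := (Matrix.isUnit_iff_isUnit_det ρ).mpr hρ.det_pos.ne'.isUnit
  have h6 : Cᴴ = 0 := by
    obtain ⟨u, hu⟩ := hunit
    calc Cᴴ = ↑u⁻¹ * (ρ * Cᴴ) := by
              rw [← hu, ← Matrix.mul_assoc, u.inv_mul, Matrix.one_mul]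
      _ = 0 := by rw [h5, Matrix.mul_zero]
  rw [← Matrix.conjTranspose_conjTranspose C, h6]
  simp

theorem stmt_6 {n : ℕ} (Φ : Matrix (Fin n) (Fin n) ℂ →ₗ[ℂ] Matrix (Fin n) (Fin n) ℂ)
    (hunital : Φ 1 = 1)
    (hSchwarz : ∀ X, (Φ (Xᴴ * X) - (Φ X)ᴴ * (Φ X)).PosSemidef)
    (ρ : Matrix (Fin n) (Fin n) ℂ) (hρ : ρ.PosDef)
    (hinv : ∀ X, (ρ * Φ X).trace = (ρ * X).trace)
    (U : Matrix (Fin n) (Fin n) ℂ) (lam : ℂ) (hlam : ‖lam‖ = 1)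
    (hU : Φ U = lam • U) :
    Φ (Uᴴ * U) = (Φ U)ᴴ * (Φ U) := by
  have hprod : (Φ U)ᴴ * (Φ U) = Uᴴ * U := by
    rw [hU, Matrix.conjTranspose_smul, Matrix.smul_mul, Matrix.mul_smul, smul_smul]
    have : star lam * lam = 1 := by
      rw [Complex.star_def, mul_comm, Complex.mul_conj, Complex.normSq_eq_norm_sq, hlam]
      norm_num
    rw [this, one_smul]
  have htr : (ρ * (Φ (Uᴴ * U) - (Φ U)ᴴ * (Φ U))).trace = 0 := by
    rw [Matrix.mul_sub, Matrix.trace_sub, hinv, hprod, sub_self]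
  have := psd_eq_zero_of_trace_rho hρ (hSchwarz U) htr
  have := sub_eq_zero.mp this
  exact this
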